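/- Let N_1, N_2 be n×n real symmetric matrices with N_1 positive definite and N_2 − N_1 positive semidefinite, and let Q̃_1, Q̃_2, Q̂_1, Q̂_2 be n×n real positive semidefinite matrices with (Q̃_1, Q̃_2) ≠ (Q̂_1, Q̂_2). If r_1 and r_2 are real numbers with r_1 ≥ r_2/4 > 0, then Tr[ r_1 (Q̂_1 − Q̃_1)( (N_1 + Q̃_1)^{−1} − (N_1 + Q̂_1)^{−1} ) + r_2 (Q̂_2 − Q̃_2)( (N_2 + Q̃_1 + Q̃_2)^{−1} − (N_2 + Q̂_1 + Q̂_2)^{−1} ) ] > 0. -/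

import Mathlib

open Matrix
variable {n : ℕ}

open scoped MatrixOrder in
noncomputable def Matrix.PosSemidef.sqrt {A : Matrix (Fin n) (Fin n) ℝ} (_hA : A.PosSemidef) :
    Matrix (Fin n) (Fin n) ℝ := CFC.sqrt A

open scoped MatrixOrder in
lemma Matrix.PosSemidef.posSemidef_sqrt {A : Matrix (Fin n) (Fin n) ℝ} (hA : A.PosSemidef) :
    hA.sqrt.PosSemidef := Matrix.nonneg_iff_posSemidef.mp (CFC.sqrt_nonneg A)

open scoped MatrixOrder in
lemma Matrix.PosSemidef.sqrt_mul_self {A : Matrix (Fin n) (Fin n) ℝ} (hA : A.PosSemidef) :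
    hA.sqrt * hA.sqrt = A := CFC.sqrt_mul_sqrt_self A hA.nonneg

lemma trace_sq_nonneg (Y : Matrix (Fin n) (Fin n) ℝ) : 0 ≤ trace (Yᴴ * Y) := by
  have h : trace (Yᴴ * Y) = ∑ j, ∑ i, (Y i j)^2 := by
    simp [Matrix.trace, Matrix.diag, Matrix.mul_apply, sq]
  rw [h]; positivity

lemma eq_zero_of_trace_sq (Y : Matrix (Fin n) (Fin n) ℝ) (h : trace (Yᴴ * Y) = 0) : Y = 0 := by
  have h2 : trace (Yᴴ * Y) = ∑ j, ∑ i, (Y i j)^2 := by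
    simp [Matrix.trace, Matrix.diag, Matrix.mul_apply, sq]
  rw [h2] at h
  ext i j
  have h3 := (Finset.sum_eq_zero_iff_of_nonneg (fun j _ => Finset.sum_nonneg
    (fun i _ => sq_nonneg (Y i j)))).mp h j (Finset.mem_univ j)
  have h4 := (Finset.sum_eq_zero_iff_of_nonneg (fun i _ => sq_nonneg (Y i j))).mp h3 i
    (Finset.mem_univ i)
  simpa using pow_eq_zero_iff (n := 2) (by norm_num) |>.mp h4

lemma sqrt_det_isUnit {W : Matrix (Fin n) (Fin n) ℝ} (hW : W.PosDef) :
    IsUnit (hW.posSemidef.sqrt).det := by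
  have h : (hW.posSemidef.sqrt).det * (hW.posSemidef.sqrt).det = W.det := by
    rw [← Matrix.det_mul, hW.posSemidef.sqrt_mul_self]
  have hW0 : W.det ≠ 0 := hW.det_pos.ne'
  exact isUnit_iff_ne_zero.mpr (fun h0 => hW0 (by rw [← h, h0, zero_mul]))

lemma quad_form_eq {Δ W U : Matrix (Fin n) (Fin n) ℝ} (hΔ : Δᴴ = Δ) (hW : W.PosDef) :
    trace (Δ * (Uᴴ * U) * Δ * W) =
      trace ((U * Δ * hW.posSemidef.sqrt)ᴴ * (U * Δ * hW.posSemidef.sqrt)) := by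
  set S := hW.posSemidef.sqrt with hSdef
  have hSh : Sᴴ = S := hW.posSemidef.posSemidef_sqrt.isHermitian
  have hSS : S * S = W := hW.posSemidef.sqrt_mul_self
  have h1 : (U * Δ * S)ᴴ * (U * Δ * S) = S * (Δ * (Uᴴ * (U * (Δ * S)))) := by
    simp only [Matrix.conjTranspose_mul, hΔ, hSh, Matrix.mul_assoc]
  rw [h1]
  conv_rhs => rw [Matrix.trace_mul_comm]
  rw [← hSS]
  simp only [Matrix.mul_assoc]

lemma quad_nonneg {Δ W mid U : Matrix (Fin n) (Fin n) ℝ} (hΔ : Δᴴ = Δ) (hW : W.PosDef)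
    (hmid : mid = Uᴴ * U) : 0 ≤ trace (Δ * mid * Δ * W) := by
  rw [hmid, quad_form_eq hΔ hW]; exact trace_sq_nonneg _

lemma quad_zero {Δ W mid U : Matrix (Fin n) (Fin n) ℝ} (hΔ : Δᴴ = Δ) (hW : W.PosDef)
    (hmid : mid = Uᴴ * U) (h : trace (Δ * mid * Δ * W) = 0) : U * Δ = 0 := by
  rw [hmid, quad_form_eq hΔ hW] at h
  have h2 := eq_zero_of_trace_sq _ h
  have hdet := sqrt_det_isUnit hW
  calc U * Δ = U * Δ * (hW.posSemidef.sqrt * (hW.posSemidef.sqrt)⁻¹) := by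
        rw [Matrix.mul_nonsing_inv _ hdet, Matrix.mul_one]
    _ = U * Δ * hW.posSemidef.sqrt * (hW.posSemidef.sqrt)⁻¹ := by
        simp only [Matrix.mul_assoc]
    _ = 0 := by rw [h2, Matrix.zero_mul]

lemma matResolvent {A B : Matrix (Fin n) (Fin n) ℝ} (hA : IsUnit A.det) (hB : IsUnit B.det) :
    A⁻¹ - B⁻¹ = A⁻¹ * (B - A) * B⁻¹ := by
  rw [Matrix.mul_sub, Matrix.sub_mul, Matrix.mul_assoc, Matrix.mul_nonsing_inv _ hB,
    Matrix.nonsing_inv_mul _ hA, Matrix.mul_one, Matrix.one_mul]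

lemma inv_sub_inv_expand {A C : Matrix (Fin n) (Fin n) ℝ} (hA : IsUnit A.det)
    (hC : IsUnit C.det) :
    A⁻¹ - C⁻¹ = C⁻¹ * (C - A) * C⁻¹ + C⁻¹ * (C - A) * A⁻¹ * (C - A) * C⁻¹ := by
  have h1 : A⁻¹ - C⁻¹ = A⁻¹ * (C - A) * C⁻¹ := matResolvent hA hC
  have h2 : A⁻¹ - C⁻¹ = C⁻¹ * (C - A) * A⁻¹ := by
    have h := matResolvent hC hA
    have h3 : A⁻¹ - C⁻¹ = -(C⁻¹ - A⁻¹) := by abel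
    rw [h3, h]; noncomm_ring
  rw [h1]
  have h3 : A⁻¹ * (C - A) * C⁻¹ =
      C⁻¹ * (C - A) * C⁻¹ + (A⁻¹ - C⁻¹) * ((C - A) * C⁻¹) := by noncomm_ring
  rw [h3, h2]; noncomm_ring

lemma trace_cyc4 (X Y Z W : Matrix (Fin n) (Fin n) ℝ) :
    trace (X * Y * Z * W) = trace (Z * W * X * Y) := by
  calc trace (X * Y * Z * W) = trace ((X * Y) * (Z * W)) := by rw [Matrix.mul_assoc]
    _ = trace ((Z * W) * (X * Y)) := trace_mul_comm _ _
    _ = trace (Z * W * X * Y) := by simp only [Matrix.mul_assoc]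

set_option maxHeartbeats 1600000 in
/-- DSC quantity of the 2-user ADBC game is strictly positive at distinct
feasible points for weights `r₁ ≥ r₂/4 > 0`. -/
theorem adbc_two_user_dsc_pos (n : ℕ)
    (N1 N2 Qt1 Qt2 Qh1 Qh2 : Matrix (Fin n) (Fin n) ℝ)
    (hN2symm : N2.IsSymm)
    (hN1 : N1.PosDef) (hdeg : (N2 - N1).PosSemidef)
    (hQt1 : Qt1.PosSemidef) (hQt2 : Qt2.PosSemidef)
    (hQh1 : Qh1.PosSemidef) (hQh2 : Qh2.PosSemidef)
    (hne : (Qt1, Qt2) ≠ (Qh1, Qh2))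
    (r1 r2 : ℝ) (hr1 : r2 / 4 ≤ r1) (hr2 : 0 < r2 / 4) :
    0 < Matrix.trace
      (r1 • ((Qh1 - Qt1) * ((N1 + Qt1)⁻¹ - (N1 + Qh1)⁻¹)) +
       r2 • ((Qh2 - Qt2) * ((N2 + Qt1 + Qt2)⁻¹ - (N2 + Qh1 + Qh2)⁻¹))) := by
  set A := N1 + Qt1 with hAdef
  set B := N1 + Qh1 with hBdef
  set C := N2 + Qt1 + Qt2 with hCdef
  set E := N2 + Qh1 + Qh2 with hEdef
  set D1 := Qh1 - Qt1 with hD1def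
  set D2 := Qh2 - Qt2 with hD2def
  -- positive definiteness
  have hN2 : N2.PosDef := by
    have h := hN1.add_posSemidef hdeg
    rwa [show N1 + (N2 - N1) = N2 by abel] at h
  have hA : A.PosDef := hN1.add_posSemidef hQt1
  have hB : B.PosDef := hN1.add_posSemidef hQh1
  have hC : C.PosDef := (hN2.add_posSemidef hQt1).add_posSemidef hQt2
  have hE : E.PosDef := (hN2.add_posSemidef hQh1).add_posSemidef hQh2
  have hAd : IsUnit A.det := hA.det_pos.ne'.isUnit
  have hBd : IsUnit B.det := hB.det_pos.ne'.isUnit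
  have hCd : IsUnit C.det := hC.det_pos.ne'.isUnit
  have hEd : IsUnit E.det := hE.det_pos.ne'.isUnit
  have hAi : (A⁻¹).PosDef := hA.inv
  have hBi : (B⁻¹).PosDef := hB.inv
  have hCi : (C⁻¹).PosDef := hC.inv
  have hEi : (E⁻¹).PosDef := hE.inv
  -- PSD of gaps
  have hM1 : (C - A).PosSemidef := by
    rw [hCdef, hAdef, show N2 + Qt1 + Qt2 - (N1 + Qt1) = (N2 - N1) + Qt2 by abel]
    exact hdeg.add hQt2
  have hM2 : (E - B).PosSemidef := by
    rw [hEdef, hBdef, show N2 + Qh1 + Qh2 - (N1 + Qh1) = (N2 - N1) + Qh2 by abel]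
    exact hdeg.add hQh2
  -- hermitian equations
  have hD1h : D1ᴴ = D1 := hQh1.isHermitian.sub hQt1.isHermitian
  have hD2h : D2ᴴ = D2 := hQh2.isHermitian.sub hQt2.isHermitian
  have hAih : (A⁻¹)ᴴ = A⁻¹ := hAi.isHermitian
  have hBih : (B⁻¹)ᴴ = B⁻¹ := hBi.isHermitian
  have hCih : (C⁻¹)ᴴ = C⁻¹ := hCi.isHermitian
  have hEih : (E⁻¹)ᴴ = E⁻¹ := hEi.isHermitian
  have hM1h : (C - A)ᴴ = C - A := hM1.isHermitian
  have hM2h : (E - B)ᴴ = E - B := hM2.isHermitian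
  -- square roots
  set Sc := hCi.posSemidef.sqrt with hScdef
  have hSch : Scᴴ = Sc := hCi.posSemidef.posSemidef_sqrt.isHermitian
  have hScS : Sc * Sc = C⁻¹ := hCi.posSemidef.sqrt_mul_self
  set R1 := hM1.sqrt with hR1def
  have hR1h : R1ᴴ = R1 := hM1.posSemidef_sqrt.isHermitian
  have hR1S : R1 * R1 = C - A := hM1.sqrt_mul_self
  set R2 := hM2.sqrt with hR2def
  have hR2h : R2ᴴ = R2 := hM2.posSemidef_sqrt.isHermitian
  have hR2S : R2 * R2 = E - B := hM2.sqrt_mul_self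
  set Ta := hAi.posSemidef.sqrt with hTadef
  have hTah : Taᴴ = Ta := hAi.posSemidef.posSemidef_sqrt.isHermitian
  have hTaS : Ta * Ta = A⁻¹ := hAi.posSemidef.sqrt_mul_self
  set Tb := hBi.posSemidef.sqrt with hTbdef
  have hTbh : Tbᴴ = Tb := hBi.posSemidef.posSemidef_sqrt.isHermitian
  have hTbS : Tb * Tb = B⁻¹ := hBi.posSemidef.sqrt_mul_self
  -- middle-matrix factorizations
  have sqmul : ∀ (T P X : Matrix (Fin n) (Fin n) ℝ), T * T = P → T * (T * X) = P * X :=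
    fun T P X h => by rw [← Matrix.mul_assoc, h]
  have hmid_p : C⁻¹ = Scᴴ * Sc := by rw [hSch, hScS]
  have hmid_g1a : C⁻¹ * (C - A) * C⁻¹ = (R1 * C⁻¹)ᴴ * (R1 * C⁻¹) := by
    rw [Matrix.conjTranspose_mul, hR1h, hCih]
    simp only [Matrix.mul_assoc]
    rw [sqmul R1 (C - A) C⁻¹ hR1S]
  have hmid_g1b : C⁻¹ * (C - A) * A⁻¹ * (C - A) * C⁻¹
      = (Ta * (C - A) * C⁻¹)ᴴ * (Ta * (C - A) * C⁻¹) := by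
    rw [Matrix.conjTranspose_mul, Matrix.conjTranspose_mul, hTah, hM1h, hCih]
    simp only [Matrix.mul_assoc]
    rw [sqmul Ta A⁻¹ ((C - A) * C⁻¹) hTaS]
  have hmid_g2a : E⁻¹ * (E - B) * E⁻¹ = (R2 * E⁻¹)ᴴ * (R2 * E⁻¹) := by
    rw [Matrix.conjTranspose_mul, hR2h, hEih]
    simp only [Matrix.mul_assoc]
    rw [sqmul R2 (E - B) E⁻¹ hR2S]
  have hmid_g2b : E⁻¹ * (E - B) * B⁻¹ * (E - B) * E⁻¹
      = (Tb * (E - B) * E⁻¹)ᴴ * (Tb * (E - B) * E⁻¹) := by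
    rw [Matrix.conjTranspose_mul, Matrix.conjTranspose_mul, hTbh, hM2h, hEih]
    simp only [Matrix.mul_assoc]
    rw [sqmul Tb B⁻¹ ((E - B) * E⁻¹) hTbS]
  -- nonnegativity of the six pieces
  have hp1 : 0 ≤ trace (D1 * C⁻¹ * D1 * E⁻¹) := quad_nonneg hD1h hEi hmid_p
  have hg1a : 0 ≤ trace (D1 * (C⁻¹ * (C - A) * C⁻¹) * D1 * B⁻¹) :=
    quad_nonneg hD1h hBi hmid_g1a
  have hg1b : 0 ≤ trace (D1 * (C⁻¹ * (C - A) * A⁻¹ * (C - A) * C⁻¹) * D1 * B⁻¹) :=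
    quad_nonneg hD1h hBi hmid_g1b
  have hg2a : 0 ≤ trace (D1 * (E⁻¹ * (E - B) * E⁻¹) * D1 * C⁻¹) :=
    quad_nonneg hD1h hCi hmid_g2a
  have hg2b : 0 ≤ trace (D1 * (E⁻¹ * (E - B) * B⁻¹ * (E - B) * E⁻¹) * D1 * C⁻¹) :=
    quad_nonneg hD1h hCi hmid_g2b
  -- transpose needed for the symmetric cross term
  have ct_eq_t : ∀ (X : Matrix (Fin n) (Fin n) ℝ), Xᴴ = Xᵀ := fun X => by
    ext i j; simp [Matrix.conjTranspose_apply]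
  have hD1t : D1ᵀ = D1 := by rw [← ct_eq_t, hD1h]
  have hD2t : D2ᵀ = D2 := by rw [← ct_eq_t, hD2h]
  have hCit : (C⁻¹)ᵀ = C⁻¹ := by rw [← ct_eq_t, hCih]
  have hEit : (E⁻¹)ᵀ = E⁻¹ := by rw [← ct_eq_t, hEih]
  have hEt : Eᵀ = E := by rw [← ct_eq_t]; exact hE.isHermitian
  have hBt : Bᵀ = B := by rw [← ct_eq_t]; exact hB.isHermitian
  set Sm := D2 + (1/2 : ℝ) • D1 with hSmdef
  have hSmh : Smᴴ = Sm := by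
    rw [hSmdef]
    simp [Matrix.conjTranspose_add, Matrix.conjTranspose_smul, hD1h, hD2h, hD1t, hD2t]
  have hpS : 0 ≤ trace (Sm * C⁻¹ * Sm * E⁻¹) := quad_nonneg hSmh hEi hmid_p
  -- the main trace identity
  have hBA : B - A = D1 := by rw [hAdef, hBdef, hD1def]; abel
  have hEC : E - C = D1 + D2 := by rw [hCdef, hEdef, hD1def, hD2def]; abel
  have hResAB : A⁻¹ - B⁻¹ = A⁻¹ * D1 * B⁻¹ := by rw [matResolvent hAd hBd, hBA]
  have hResCE : C⁻¹ - E⁻¹ = C⁻¹ * (D1 + D2) * E⁻¹ := by rw [matResolvent hCd hEd, hEC]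
  have hACexp : A⁻¹ = C⁻¹ + (C⁻¹ * (C - A) * C⁻¹ + C⁻¹ * (C - A) * A⁻¹ * (C - A) * C⁻¹) := by
    rw [← inv_sub_inv_expand hAd hCd]; abel
  have hBEexp : B⁻¹ = E⁻¹ + (E⁻¹ * (E - B) * E⁻¹ + E⁻¹ * (E - B) * B⁻¹ * (E - B) * E⁻¹) := by
    rw [← inv_sub_inv_expand hBd hEd]; abel
  have e1 : trace (D1 * A⁻¹ * D1 * B⁻¹)
      = trace (D1 * C⁻¹ * D1 * B⁻¹)
        + (trace (D1 * (C⁻¹ * (C - A) * C⁻¹) * D1 * B⁻¹)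
          + trace (D1 * (C⁻¹ * (C - A) * A⁻¹ * (C - A) * C⁻¹) * D1 * B⁻¹)) := by
    conv_lhs => rw [hACexp]
    simp only [Matrix.mul_add, Matrix.add_mul, Matrix.trace_add]
  have e2 : trace (D1 * C⁻¹ * D1 * B⁻¹)
      = trace (D1 * C⁻¹ * D1 * E⁻¹)
        + (trace (D1 * (E⁻¹ * (E - B) * E⁻¹) * D1 * C⁻¹)
          + trace (D1 * (E⁻¹ * (E - B) * B⁻¹ * (E - B) * E⁻¹) * D1 * C⁻¹)) := by
    conv_lhs => rw [hBEexp]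
    simp only [Matrix.mul_add, Matrix.add_mul, Matrix.trace_add]
    rw [trace_cyc4 D1 C⁻¹ D1 (E⁻¹ * (E - B) * E⁻¹),
      trace_cyc4 D1 C⁻¹ D1 (E⁻¹ * (E - B) * B⁻¹ * (E - B) * E⁻¹)]
  have hsymm : trace (D1 * C⁻¹ * D2 * E⁻¹) = trace (D2 * C⁻¹ * D1 * E⁻¹) := by
    conv_lhs => rw [← Matrix.trace_transpose]
    simp only [Matrix.transpose_mul, hD1t, hD2t, hCit, hEit]
    rw [Matrix.trace_mul_comm]
    simp only [Matrix.mul_assoc]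
  have eS : trace (D2 * C⁻¹ * (D1 + D2) * E⁻¹)
      = trace (Sm * C⁻¹ * Sm * E⁻¹) - (1/4) * trace (D1 * C⁻¹ * D1 * E⁻¹) := by
    rw [hSmdef]
    simp only [Matrix.mul_add, Matrix.add_mul, Matrix.smul_mul, Matrix.mul_smul,
      Matrix.trace_add, Matrix.trace_smul, smul_eq_mul]
    rw [hsymm]; ring
  have hgoal : trace (r1 • (D1 * (A⁻¹ - B⁻¹)) + r2 • (D2 * (C⁻¹ - E⁻¹)))
      = r1 * trace (D1 * A⁻¹ * D1 * B⁻¹) + r2 * trace (D2 * C⁻¹ * (D1 + D2) * E⁻¹) := by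
    rw [hResAB, hResCE, Matrix.trace_add, Matrix.trace_smul, Matrix.trace_smul,
      smul_eq_mul, smul_eq_mul,
      show D1 * (A⁻¹ * D1 * B⁻¹) = D1 * A⁻¹ * D1 * B⁻¹ from by simp only [Matrix.mul_assoc],
      show D2 * (C⁻¹ * (D1 + D2) * E⁻¹) = D2 * C⁻¹ * (D1 + D2) * E⁻¹ from by
        simp only [Matrix.mul_assoc]]
  rw [hgoal, e1, e2, eS]
  have hr1pos : (0:ℝ) < r1 := by linarith
  have hr2pos : (0:ℝ) < r2 := by linarith
  by_cases hSm0 : Sm = 0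
  · -- degenerate direction : D2 = -(1/2) D1
    have hSm0' : D2 + (1/2 : ℝ) • D1 = 0 := by rw [← hSmdef]; exact hSm0
    have hpS0 : trace (Sm * C⁻¹ * Sm * E⁻¹) = 0 := by
      rw [hSm0]; simp
    have hD1ne : D1 ≠ 0 := by
      intro h0
      have h2 : D2 = 0 := by simpa [h0] using hSm0'
      apply hne
      have ht1 : Qh1 = Qt1 := by
        have := hD1def ▸ h0; exact sub_eq_zero.mp this
      have ht2 : Qh2 = Qt2 := by
        have := hD2def ▸ h2; exact sub_eq_zero.mp this
      rw [ht1, ht2]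
    have hga_pos : 0 < trace (D1 * (C⁻¹ * (C - A) * C⁻¹) * D1 * B⁻¹)
        + trace (D1 * (E⁻¹ * (E - B) * E⁻¹) * D1 * C⁻¹) := by
      by_contra hle
      push_neg at hle
      have h1 : trace (D1 * (C⁻¹ * (C - A) * C⁻¹) * D1 * B⁻¹) = 0 := by linarith
      have h2 : trace (D1 * (E⁻¹ * (E - B) * E⁻¹) * D1 * C⁻¹) = 0 := by linarith
      have hz1 : R1 * C⁻¹ * D1 = 0 := quad_zero hD1h hBi hmid_g1a h1
      have hz2 : R2 * E⁻¹ * D1 = 0 := quad_zero hD1h hCi hmid_g2a h2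
      have hz1' : (C - A) * C⁻¹ * D1 = 0 := by
        calc (C - A) * C⁻¹ * D1 = R1 * (R1 * C⁻¹ * D1) := by
              rw [← hR1S]; simp only [Matrix.mul_assoc]
          _ = 0 := by rw [hz1, Matrix.mul_zero]
      have hz2' : (E - B) * E⁻¹ * D1 = 0 := by
        calc (E - B) * E⁻¹ * D1 = R2 * (R2 * E⁻¹ * D1) := by
              rw [← hR2S]; simp only [Matrix.mul_assoc]
          _ = 0 := by rw [hz2, Matrix.mul_zero]
      have hM2M1 : (E - B) - (C - A) = D2 := by
        rw [hAdef, hBdef, hCdef, hEdef, hD2def]; abel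
      have hD1eq : D1 = (2:ℝ) • ((C - A) - (E - B)) := by
        have h6 : D2 = -((1/2:ℝ) • D1) := eq_neg_of_add_eq_zero_left hSm0'
        have h5 : (C - A) - (E - B) = (1/2:ℝ) • D1 := by
          rw [show (C - A) - (E - B) = -((E - B) - (C - A)) from by abel, hM2M1, h6, neg_neg]
        rw [h5, smul_smul]; norm_num
      have hstep : D1 * C⁻¹ * D1 * E⁻¹
          = ((2:ℝ) • ((C - A) - (E - B))) * C⁻¹ * D1 * E⁻¹ := by rw [← hD1eq]
      have hp1z : trace (D1 * C⁻¹ * D1 * E⁻¹) = 0 := by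
        have t1 : trace ((C - A) * C⁻¹ * D1 * E⁻¹) = 0 := by
          rw [hz1', Matrix.zero_mul, Matrix.trace_zero]
        have t2 : trace ((E - B) * C⁻¹ * D1 * E⁻¹) = 0 := by
          rw [trace_cyc4]
          have h7 : D1 * E⁻¹ * (E - B) = 0 := by
            have h8 := congrArg Matrix.conjTranspose hz2'
            simpa [Matrix.conjTranspose_mul, Matrix.transpose_mul, Matrix.transpose_sub,
              hD1t, hEit, hEt, hBt, Matrix.mul_assoc] using h8
          rw [h7, Matrix.zero_mul, Matrix.trace_zero]
        rw [hstep, Matrix.smul_mul, Matrix.smul_mul, Matrix.smul_mul, Matrix.trace_smul,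
          smul_eq_mul,
          show (C - A - (E - B)) * C⁻¹ * D1 * E⁻¹
              = (C - A) * C⁻¹ * D1 * E⁻¹ - (E - B) * C⁻¹ * D1 * E⁻¹ from by noncomm_ring,
          Matrix.trace_sub, t1, t2]
        ring
      have hScD1 : Sc * D1 = 0 := quad_zero hD1h hEi hmid_p hp1z
      have hScdet : IsUnit Sc.det := sqrt_det_isUnit hCi
      have : D1 = 0 := by
        calc D1 = Sc⁻¹ * Sc * D1 := by rw [Matrix.nonsing_inv_mul _ hScdet, Matrix.one_mul]
          _ = Sc⁻¹ * (Sc * D1) := by simp only [Matrix.mul_assoc]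
          _ = 0 := by rw [hScD1, Matrix.mul_zero]
      exact hD1ne this
    rw [hpS0]
    nlinarith [mul_nonneg (by linarith : (0:ℝ) ≤ r1 - r2/4) hp1,
      mul_pos hr1pos hga_pos,
      mul_nonneg hr1pos.le hg1b, mul_nonneg hr1pos.le hg2b]
  · -- nondegenerate direction : pS > 0
    have hpSpos : 0 < trace (Sm * C⁻¹ * Sm * E⁻¹) := by
      rcases hpS.lt_or_eq with h | h
      · exact h
      · exfalso
        have hScSm : Sc * Sm = 0 := quad_zero hSmh hEi hmid_p h.symm
        have hScdet : IsUnit Sc.det := sqrt_det_isUnit hCi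
        apply hSm0
        calc Sm = Sc⁻¹ * Sc * Sm := by rw [Matrix.nonsing_inv_mul _ hScdet, Matrix.one_mul]
          _ = Sc⁻¹ * (Sc * Sm) := by simp only [Matrix.mul_assoc]
          _ = 0 := by rw [hScSm, Matrix.mul_zero]
    nlinarith [mul_nonneg (by linarith : (0:ℝ) ≤ r1 - r2/4) hp1,
      mul_pos hr2pos hpSpos,
      mul_nonneg hr1pos.le hg1a, mul_nonneg hr1pos.le hg1b,
      mul_nonneg hr1pos.le hg2a, mul_nonneg hr1pos.le hg2b]
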